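/- Let $P(t) = 1 + 5t + 5t^2 - 6t^3 + 4t^4 - t^5$ and let $H(t)$ be the formal power series $P(-t)/(1+t)^4 \in \mathbb{Q}[[t]]$ (i.e. $H(\mathcal{O}(\mathcal{C}(\mathrm{O}(3)));-t)$ where $H(\mathcal{O};t) = P(t)/(1-t)^4$). Then the coefficient of $t^9$ in the multiplicative inverse $1/H(t)$ is $-7330$; in particular this coefficient is negative. -/

import Mathlib

open PowerSeries

theorem stmt13 :
    PowerSeries.coeff 9
        (((1 - 5 * X + 5 * X ^ 2 + 6 * X ^ 3 + 4 * X ^ 4 + X ^ 5 : ℚ⟦X⟧) *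
            (((1 + X : ℚ⟦X⟧) ^ 4)⁻¹))⁻¹) = -7330 ∧
    PowerSeries.coeff 9
        (((1 - 5 * X + 5 * X ^ 2 + 6 * X ^ 3 + 4 * X ^ 4 + X ^ 5 : ℚ⟦X⟧) *
            (((1 + X : ℚ⟦X⟧) ^ 4)⁻¹))⁻¹) < 0 := by
  set P : ℚ⟦X⟧ := 1 - 5 * X + 5 * X ^ 2 + 6 * X ^ 3 + 4 * X ^ 4 + X ^ 5 with hPdef
  set G : ℚ⟦X⟧ := (((1 + X : ℚ⟦X⟧) ^ 4)⁻¹) with hGdef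
  set Q : ℚ⟦X⟧ := 1 + 9 * X + 46 * X ^ 2 + 183 * X ^ 3 + 628 * X ^ 4 + 1912 * X ^ 5 +
      5129 * X ^ 6 + 11539 * X ^ 7 + 17883 * X ^ 8 - 7330 * X ^ 9 with hQdef
  set r : ℚ⟦X⟧ := 217727 + 121933 * X + 39091 * X ^ 2 - 11437 * X ^ 3 - 7330 * X ^ 4 with hrdef
  have hB : (1 + X : ℚ⟦X⟧) ^ 4 * G = 1 := by
    refine PowerSeries.mul_inv_cancel _ ?_
    simp
  have hPQ : P * Q = (1 + X : ℚ⟦X⟧) ^ 4 + X ^ 10 * r := by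
    rw [hPdef, hQdef, hrdef]; ring
  have hH : constantCoeff (P * G) ≠ 0 := by
    rw [hPdef, hGdef]
    simp [PowerSeries.constantCoeff_inv]
  have hHinv : (P * G)⁻¹ * (P * G) = 1 := PowerSeries.inv_mul_cancel _ hH
  have hHQ : (P * G) * Q = 1 + X ^ 10 * (r * G) := by
    calc (P * G) * Q = (P * Q) * G := by ring
    _ = ((1 + X : ℚ⟦X⟧) ^ 4 + X ^ 10 * r) * G := by rw [hPQ]
    _ = (1 + X : ℚ⟦X⟧) ^ 4 * G + X ^ 10 * (r * G) := by ring
    _ = 1 + X ^ 10 * (r * G) := by rw [hB]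
  have hdiff : (P * G)⁻¹ - Q = X ^ 10 * (-((P * G)⁻¹ * (r * G))) := by
    calc (P * G)⁻¹ - Q = (P * G)⁻¹ * 1 - ((P * G)⁻¹ * (P * G)) * Q := by rw [hHinv]; ring
    _ = (P * G)⁻¹ * (1 - (P * G) * Q) := by ring
    _ = (P * G)⁻¹ * (-(X ^ 10 * (r * G))) := by rw [hHQ]; ring
    _ = X ^ 10 * (-((P * G)⁻¹ * (r * G))) := by ring
  have hzero : PowerSeries.coeff 9 ((P * G)⁻¹ - Q) = 0 := by
    have hdvd : (X : ℚ⟦X⟧) ^ 10 ∣ (P * G)⁻¹ - Q := ⟨_, hdiff⟩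
    exact PowerSeries.X_pow_dvd_iff.mp hdvd 9 (by norm_num)
  have hQ9 : PowerSeries.coeff 9 Q = -7330 := by
    rw [hQdef]
    simp only [show (9:ℚ⟦X⟧) = (C (9:ℚ)) from (map_ofNat (C (R := ℚ)) 9).symm,
      show (46:ℚ⟦X⟧) = (C (46:ℚ)) from (map_ofNat (C (R := ℚ)) 46).symm,
      show (183:ℚ⟦X⟧) = (C (183:ℚ)) from (map_ofNat (C (R := ℚ)) 183).symm,
      show (628:ℚ⟦X⟧) = (C (628:ℚ)) from (map_ofNat (C (R := ℚ)) 628).symm,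
      show (1912:ℚ⟦X⟧) = (C (1912:ℚ)) from (map_ofNat (C (R := ℚ)) 1912).symm,
      show (5129:ℚ⟦X⟧) = (C (5129:ℚ)) from (map_ofNat (C (R := ℚ)) 5129).symm,
      show (11539:ℚ⟦X⟧) = (C (11539:ℚ)) from (map_ofNat (C (R := ℚ)) 11539).symm,
      show (17883:ℚ⟦X⟧) = (C (17883:ℚ)) from (map_ofNat (C (R := ℚ)) 17883).symm,
      show (7330:ℚ⟦X⟧) = (C (7330:ℚ)) from (map_ofNat (C (R := ℚ)) 7330).symm]
    simp [coeff_X_pow]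
  have hmain : PowerSeries.coeff 9 ((P * G)⁻¹) = -7330 := by
    have := hzero
    rw [map_sub, sub_eq_zero] at this
    rw [this, hQ9]
  exact ⟨hmain, by rw [hmain]; norm_num⟩
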